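/- Let f : ℝⁿ → ℝ be convex and let k, m, n be positive integers with k ≤ n. Then max over k-multihypergraphs H with m edges of f(∑ⱼ Hʲ) is attained by a multihypergraph consisting of m copies of a single edge x ∈ {0,1}ⁿ with exactly k ones; moreover this optimal value equals max over x ∈ {0,1}ⁿ_k of f(m·x). -/

import Mathlib

theorem stmt_12 (n k m : ℕ) (hk : 0 < k) (hkn : k ≤ n) (hm : 0 < m)
    (f : (Fin n → ℝ) → ℝ) (hf : ConvexOn ℝ Set.univ f) :
    ∃ x : Finset (Fin n), x.card = k ∧
      (∀ H : Fin m → Finset (Fin n), (∀ j, (H j).card = k) →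
        f (fun i => ∑ j, if i ∈ H j then (1 : ℝ) else 0) ≤
          f (fun i => if i ∈ x then (m : ℝ) else 0)) ∧
      ∀ y : Finset (Fin n), y.card = k →
        f (fun i => if i ∈ y then (m : ℝ) else 0) ≤
          f (fun i => if i ∈ x then (m : ℝ) else 0) := by
  classical
  set S : Finset (Finset (Fin n)) := Finset.univ.powersetCard k with hS
  have hSne : S.Nonempty := by
    obtain ⟨y, hy⟩ := Finset.exists_subset_card_eq (s := (Finset.univ : Finset (Fin n)))
      (by simpa using hkn)
    exact ⟨y, by simp [hS, Finset.mem_powersetCard, hy.1, hy.2]⟩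
  set g : Finset (Fin n) → ℝ := fun y => f (fun i => if i ∈ y then (m : ℝ) else 0) with hg
  obtain ⟨x, hxS, hxmax⟩ := S.exists_max_image g hSne
  have hxcard : x.card = k := (Finset.mem_powersetCard.mp hxS).2
  have hmaxall : ∀ y : Finset (Fin n), y.card = k → g y ≤ g x := by
    intro y hy
    exact hxmax y (by simp [hS, Finset.mem_powersetCard, hy])
  refine ⟨x, hxcard, ?_, hmaxall⟩
  intro H hH
  set p : Fin m → (Fin n → ℝ) := fun j i => if i ∈ H j then (m : ℝ) else 0 with hp
  have hwsum : (0:ℝ) < ∑ _j : Fin m, (1:ℝ) := by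
    simp [Finset.sum_const]
    exact_mod_cast hm
  obtain ⟨j, _, hj⟩ := hf.exists_ge_of_centerMass (t := Finset.univ) (w := fun _ => (1:ℝ))
    (p := p) (fun _ _ => zero_le_one) hwsum (fun _ _ => Set.mem_univ _)
  have hcm : Finset.univ.centerMass (fun _ : Fin m => (1:ℝ)) p =
      fun i => ∑ j, if i ∈ H j then (1 : ℝ) else 0 := by
    rw [Finset.centerMass]
    funext i
    simp only [Finset.sum_const, Finset.card_univ, Fintype.card_fin, nsmul_eq_mul, mul_one,
      one_smul, Pi.smul_apply, smul_eq_mul, Finset.sum_apply]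
    have hm' : (m : ℝ) ≠ 0 := by exact_mod_cast hm.ne'
    rw [Finset.mul_sum]
    refine Finset.sum_congr rfl fun j _ => ?_
    simp only [hp]
    split <;> field_simp <;> simp
  rw [hcm] at hj
  exact hj.trans (hmaxall (H j) (hH j))
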